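/- Let ξ be a refining quadratic map and let φ ∈ {L, R, M} be a digit with nonzero determinant. If ξ([-1,1], [-1,1]) ⊆ φ([-1,1]), then the composed quadratic map φ⁻¹ ∘ ξ is refining: it maps [-1,1]×[-1,1] into [-1,1] with nonvanishing denominator. -/

import Mathlib

lemma inv_comp_key (p q r s t z : ℝ) (hden : r * t + s ≠ 0)
    (hdet : p * s - q * r ≠ 0) (hz : (p * t + q) / (r * t + s) = z) :
    -r * z + p ≠ 0 ∧ (s * z - q) / (-r * z + p) = t := by
  subst hz
  have h1 : -r * ((p * t + q) / (r * t + s)) + p = (p * s - q * r) / (r * t + s) := by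
    field_simp; ring
  constructor
  · rw [h1]
    exact div_ne_zero hdet hden
  · rw [h1, div_eq_iff (div_ne_zero hdet hden)]
    rw [mul_div_assoc', mul_div_assoc', eq_div_iff hden, sub_mul, div_mul_cancel₀ _ hden]; ring

theorem inv_comp_quadratic_refining (a b c d e f g h : ℝ) (ξ : ℝ → ℝ → ℝ)
    (hξ : ξ = fun x y =>
      (a * x * y + b * x + c * y + d) / (e * x * y + f * x + g * y + h))
    (hbnd : ∀ x ∈ Set.Icc (-1 : ℝ) 1, ∀ y ∈ Set.Icc (-1 : ℝ) 1,
      e * x * y + f * x + g * y + h ≠ 0)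
    (href : ∀ x ∈ Set.Icc (-1 : ℝ) 1, ∀ y ∈ Set.Icc (-1 : ℝ) 1,
      ξ x y ∈ Set.Icc (-1 : ℝ) 1)
    (p q r s : ℝ)
    (hφ : (p, q, r, s) = ((1 : ℝ), -1, 1, 3) ∨
          (p, q, r, s) = ((1 : ℝ), 1, -1, 3) ∨
          (p, q, r, s) = ((1 : ℝ), 0, 0, 3))
    (hdet : p * s - q * r ≠ 0)
    (hincl : ∀ x ∈ Set.Icc (-1 : ℝ) 1, ∀ y ∈ Set.Icc (-1 : ℝ) 1,
      ξ x y ∈ (fun t => (p * t + q) / (r * t + s)) '' Set.Icc (-1 : ℝ) 1) :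
    ∀ x ∈ Set.Icc (-1 : ℝ) 1, ∀ y ∈ Set.Icc (-1 : ℝ) 1,
      -r * ξ x y + p ≠ 0 ∧
      (s * ξ x y - q) / (-r * ξ x y + p) ∈ Set.Icc (-1 : ℝ) 1 := by
  intro x hx y hy
  obtain ⟨t, ht, hz⟩ := hincl x hx y hy
  have hden : r * t + s ≠ 0 := by
    rcases hφ with hc | hc | hc <;>
      simp only [Prod.mk.injEq] at hc <;>
      obtain ⟨rfl, rfl, rfl, rfl⟩ := hc <;>
      nlinarith [ht.1, ht.2]
  obtain ⟨h1, h2⟩ := inv_comp_key p q r s t (ξ x y) hden hdet hz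
  exact ⟨h1, h2 ▸ ht⟩
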